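/- Let X = ∏_{n=1}^κ X_n and Z = ∏_{m=1}^μ Z_m be finite products of nonempty finite sets, and let components g̃_{mn}, g̃_m, g̃_{μ+n,m} satisfy the zero-mean and zero-marginal conditions (Σ_{z_m} g̃_m(z_m) = 0; Σ_{z_m} g̃_{mn}(z_m, z_n) = 0 for all fixed z_n, m ≠ n; Σ_{z_m} g̃_{μ+n,m}(x_n, z_m) = 0 for all fixed x_n). Define g̃(x,z) = (1/2) Σ_{m,n=1}^μ g̃_{mn}(z_m,z_n) + Σ_{m=1}^μ g̃_m(z_m) + Σ_{m,n} g̃_{μ+n,m}(x_n,z_m), p(x) = min_{z ∈ Z} g̃(x,z), and let γ(u,v) = (1/2)vᵀFv + hᵀv + uᵀGv be the associated quadratic form and r² = μ − Σ_{m=1}^μ 1/|Z_m|. Then the sphere relaxation provides a lower bound: for every x ∈ X, min_{‖v‖ = r} γ(u(x), v) ≤ p(x); i.e. p̲(x) = γ(u(x), v̂(x)) ≤ p(x) for the relaxed minimizer v̂(x). -/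

import Mathlib

open Matrix

/-- The sphere relaxation of the parametrized HDMR minimization gives
a lower bound: for HDMR components satisfying the zero-mean / zero-marginal
conditions (second-order components symmetric with zero diagonal, as for HDMR of a
single function), with `γ(u,v) = (1/2) vᵀFv + hᵀv + uᵀGv` and
`r² = μ − ∑_m 1/|Z_m|`, for every `x ∈ X` the infimum of `γ(u(x),·)` over the
sphere `‖v‖ = r` is at most `p(x) = min_{z ∈ Z} g̃(x,z)`. -/
theorem trust_region_relaxation_lower_bound
    (κ μ : ℕ) (X : Fin κ → Type) (Z : Fin μ → Type)
    [∀ n, Fintype (X n)] [∀ n, Nonempty (X n)] [∀ n, DecidableEq (X n)]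
    [∀ m, Fintype (Z m)] [∀ m, Nonempty (Z m)] [∀ m, DecidableEq (Z m)]
    (gZZ : ∀ m n : Fin μ, Z m → Z n → ℝ)
    (gZ : ∀ m : Fin μ, Z m → ℝ)
    (gXZ : ∀ (n : Fin κ) (m : Fin μ), X n → Z m → ℝ)
    (hdiag : ∀ (m : Fin μ) (a b : Z m), gZZ m m a b = 0)
    (hsymm : ∀ (m n : Fin μ) (a : Z m) (b : Z n), gZZ m n a b = gZZ n m b a)
    (hzero1 : ∀ m : Fin μ, ∑ zm : Z m, gZ m zm = 0)
    (hzero2 : ∀ (m n : Fin μ), m ≠ n → ∀ zn : Z n, ∑ zm : Z m, gZZ m n zm zn = 0)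
    (hzeroXZ : ∀ (n : Fin κ) (m : Fin μ) (xn : X n), ∑ zm : Z m, gXZ n m xn zm = 0)
    (gt : (∀ n, X n) → (∀ m, Z m) → ℝ)
    (hgt : ∀ (x : ∀ n, X n) (z : ∀ m, Z m),
      gt x z = (1 / 2) * ∑ m, ∑ n, gZZ m n (z m) (z n) + ∑ m, gZ m (z m) +
        ∑ m, ∑ n, gXZ n m (x n) (z m))
    (F : Matrix ((m : Fin μ) × Z m) ((m : Fin μ) × Z m) ℝ)
    (hF : ∀ p q : (m : Fin μ) × Z m, F p q = gZZ p.1 q.1 p.2 q.2)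
    (G : Matrix ((n : Fin κ) × X n) ((m : Fin μ) × Z m) ℝ)
    (hG : ∀ (p : (n : Fin κ) × X n) (q : (m : Fin μ) × Z m), G p q = gXZ p.1 q.1 p.2 q.2)
    (h : ((m : Fin μ) × Z m) → ℝ)
    (hh : ∀ p : (m : Fin μ) × Z m, h p = gZ p.1 p.2)
    (u : (∀ n, X n) → ((n : Fin κ) × X n) → ℝ)
    (hu : ∀ (x : ∀ n, X n) (p : (n : Fin κ) × X n),
      u x p = if p.2 = x p.1 then (1 : ℝ) else 0)
    (r : ℝ)
    (hr : r = Real.sqrt ((μ : ℝ) - ∑ m : Fin μ, 1 / (Fintype.card (Z m) : ℝ))) :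
    ∀ x : ∀ n, X n,
      sInf {y : ℝ | ∃ v : ((m : Fin μ) × Z m) → ℝ,
          Real.sqrt (∑ p, v p ^ 2) = r ∧
          y = (1 / 2) * (v ⬝ᵥ F.mulVec v) + h ⬝ᵥ v + u x ⬝ᵥ G.mulVec v} ≤
        ⨅ z : ∀ m, Z m, gt x z := by
  intro x
  classical
  set c : Fin μ → ℝ := fun m => 1 / (Fintype.card (Z m) : ℝ) with hc
  have hcardpos : ∀ m, (0:ℝ) < (Fintype.card (Z m) : ℝ) := fun m => by
    exact_mod_cast Fintype.card_pos
  set w : (∀ m, Z m) → ((m : Fin μ) × Z m) → ℝ :=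
    fun z p => (if p.2 = z p.1 then (1:ℝ) else 0) - c p.1 with hw
  set f : (((m : Fin μ) × Z m) → ℝ) → ℝ :=
    fun v => (1 / 2) * (v ⬝ᵥ F.mulVec v) + h ⬝ᵥ v + u x ⬝ᵥ G.mulVec v with hf
  -- sum over the sigma type
  have hsig : ∀ g : ((m : Fin μ) × Z m) → ℝ,
      ∑ p : (m : Fin μ) × Z m, g p = ∑ m : Fin μ, ∑ a : Z m, g ⟨m, a⟩ := by
    intro g
    rw [← Finset.univ_sigma_univ, Finset.sum_sigma]
  have hsigX : ∀ g : ((n : Fin κ) × X n) → ℝ,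
      ∑ p : (n : Fin κ) × X n, g p = ∑ n : Fin κ, ∑ a : X n, g ⟨n, a⟩ := by
    intro g
    rw [← Finset.univ_sigma_univ, Finset.sum_sigma]
  -- sum of squares of w z
  have hsq : ∀ z : ∀ m, Z m,
      ∑ p : (m : Fin μ) × Z m, w z p ^ 2 = (μ : ℝ) - ∑ m : Fin μ, c m := by
    intro z
    rw [hsig]
    have hinner : ∀ m : Fin μ, ∑ a : Z m, w z ⟨m, a⟩ ^ 2 = 1 - c m := by
      intro m
      have h1 : ∀ a : Z m, w z ⟨m, a⟩ ^ 2
          = (if a = z m then (1:ℝ) - 2 * c m else 0) + c m ^ 2 := by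
        intro a
        simp only [hw]
        split <;> ring
      rw [Finset.sum_congr rfl fun a _ => h1 a, Finset.sum_add_distrib,
        Finset.sum_ite_eq' Finset.univ (z m) (fun _ => (1:ℝ) - 2 * c m)]
      have hcm : (Fintype.card (Z m) : ℝ) * c m ^ 2 = c m := by
        field_simp [hc]
        rw [hc]; field_simp [(hcardpos m).ne']
      simp only [Finset.mem_univ, if_true, Finset.sum_const, Finset.card_univ,
        nsmul_eq_mul]
      rw [hcm]
      ring
    rw [Finset.sum_congr rfl fun m _ => hinner m, Finset.sum_sub_distrib]
    simp
  -- marginal sums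
  have hrow : ∀ (m n : Fin μ) (b : Z n), ∑ a : Z m, gZZ m n a b = 0 := by
    intro m n b
    by_cases hmn : m = n
    · subst hmn
      simp [hdiag]
    · exact hzero2 m n hmn b
  have hcol : ∀ (m n : Fin μ) (a : Z m), ∑ b : Z n, gZZ m n a b = 0 := by
    intro m n a
    rw [Finset.sum_congr rfl fun b _ => hsymm m n a b]
    exact hrow n m a
  -- value of f at w z
  have hval : ∀ z : ∀ m, Z m, f (w z) = gt x z := by
    intro z
    have hmv : ∀ p : (m : Fin μ) × Z m,
        F.mulVec (w z) p = ∑ n, gZZ p.1 n p.2 (z n) := by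
      intro p
      unfold Matrix.mulVec dotProduct
      rw [hsig]
      refine Finset.sum_congr rfl fun n _ => ?_
      have : ∀ b : Z n, F p ⟨n, b⟩ * w z ⟨n, b⟩
          = (if b = z n then gZZ p.1 n p.2 b else 0) - c n * gZZ p.1 n p.2 b := by
        intro b
        rw [hF]
        simp only [hw]
        split <;> ring
      rw [Finset.sum_congr rfl fun b _ => this b, Finset.sum_sub_distrib,
        Finset.sum_ite_eq' Finset.univ (z n) (fun b => gZZ p.1 n p.2 b),
        ← Finset.mul_sum, hcol p.1 n p.2]
      simp
    have hA : w z ⬝ᵥ F.mulVec (w z) = ∑ m, ∑ n, gZZ m n (z m) (z n) := by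
      unfold dotProduct
      rw [hsig]
      refine Finset.sum_congr rfl fun m _ => ?_
      have : ∀ a : Z m, w z ⟨m, a⟩ * F.mulVec (w z) ⟨m, a⟩
          = (if a = z m then ∑ n, gZZ m n a (z n) else 0)
            - c m * ∑ n, gZZ m n a (z n) := by
        intro a
        rw [hmv ⟨m, a⟩]
        simp only [hw]
        split <;> ring
      rw [Finset.sum_congr rfl fun a _ => this a, Finset.sum_sub_distrib,
        Finset.sum_ite_eq' Finset.univ (z m) (fun a => ∑ n, gZZ m n a (z n)),
        ← Finset.mul_sum, Finset.sum_comm]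
      have : ∑ n, ∑ a : Z m, gZZ m n a (z n) = 0 := by
        rw [Finset.sum_congr rfl fun n _ => hrow m n (z n)]
        simp
      rw [this]
      simp
    have hB : h ⬝ᵥ w z = ∑ m, gZ m (z m) := by
      unfold dotProduct
      rw [hsig]
      refine Finset.sum_congr rfl fun m _ => ?_
      have : ∀ a : Z m, h ⟨m, a⟩ * w z ⟨m, a⟩
          = (if a = z m then gZ m a else 0) - c m * gZ m a := by
        intro a
        rw [hh]
        simp only [hw]
        split <;> ring
      rw [Finset.sum_congr rfl fun a _ => this a, Finset.sum_sub_distrib,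
        Finset.sum_ite_eq' Finset.univ (z m) (fun a => gZ m a),
        ← Finset.mul_sum, hzero1 m]
      simp
    have hC : u x ⬝ᵥ G.mulVec (w z) = ∑ m, ∑ n, gXZ n m (x n) (z m) := by
      unfold dotProduct
      rw [hsigX]
      have hGv : ∀ p : (n : Fin κ) × X n,
          G.mulVec (w z) p = ∑ m, gXZ p.1 m p.2 (z m) := by
        intro p
        unfold Matrix.mulVec dotProduct
        rw [hsig]
        refine Finset.sum_congr rfl fun m _ => ?_
        have : ∀ a : Z m, G p ⟨m, a⟩ * w z ⟨m, a⟩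
            = (if a = z m then gXZ p.1 m p.2 a else 0) - c m * gXZ p.1 m p.2 a := by
          intro a
          rw [hG]
          simp only [hw]
          split <;> ring
        rw [Finset.sum_congr rfl fun a _ => this a, Finset.sum_sub_distrib,
          Finset.sum_ite_eq' Finset.univ (z m) (fun a => gXZ p.1 m p.2 a),
          ← Finset.mul_sum, hzeroXZ p.1 m p.2]
        simp
      have : ∀ n : Fin κ, ∀ a : X n, u x ⟨n, a⟩ * G.mulVec (w z) ⟨n, a⟩
          = if a = x n then ∑ m, gXZ n m a (z m) else 0 := by
        intro n a
        rw [hu, hGv ⟨n, a⟩]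
        simp only []
        split <;> simp
      rw [Finset.sum_congr rfl fun n _ => Finset.sum_congr rfl fun a _ => this n a]
      rw [Finset.sum_congr rfl fun n _ =>
        Finset.sum_ite_eq' Finset.univ (x n) (fun a => ∑ m, gXZ n m a (z m))]
      simp only [Finset.mem_univ, if_true]
      exact Finset.sum_comm
    rw [hf]
    simp only [hA, hB, hC, hgt x z]
  -- norm condition
  have hnorm : ∀ z : ∀ m, Z m, Real.sqrt (∑ p, w z p ^ 2) = r := by
    intro z
    rw [hsq z, hr, hc]
  -- the set S as an image
  set K : Set (((m : Fin μ) × Z m) → ℝ) :=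
    {v | Real.sqrt (∑ p, v p ^ 2) = r} with hK
  have hSet : {y : ℝ | ∃ v : ((m : Fin μ) × Z m) → ℝ,
      Real.sqrt (∑ p, v p ^ 2) = r ∧
      y = (1 / 2) * (v ⬝ᵥ F.mulVec v) + h ⬝ᵥ v + u x ⬝ᵥ G.mulVec v} = f '' K := by
    ext y
    constructor
    · rintro ⟨v, hv1, hv2⟩
      exact ⟨v, hv1, hv2.symm⟩
    · rintro ⟨v, hv1, hv2⟩
      exact ⟨v, hv1, hv2.symm⟩
  have hr0 : 0 ≤ r := by rw [hr]; exact Real.sqrt_nonneg _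
  -- K is compact
  have hKclosed : IsClosed K := by
    have : Continuous fun v : ((m : Fin μ) × Z m) → ℝ =>
        Real.sqrt (∑ p, v p ^ 2) := by
      apply Real.continuous_sqrt.comp
      exact continuous_finset_sum _ fun p _ => (continuous_apply p).pow 2
    exact isClosed_eq this continuous_const
  have hKbdd : Bornology.IsBounded K := by
    apply (Metric.isBounded_closedBall (x := (0 : ((m : Fin μ) × Z m) → ℝ)) (r := r)).subset
    intro v hv
    rw [Metric.mem_closedBall, dist_zero_right]
    rw [pi_norm_le_iff_of_nonneg hr0]
    intro p
    rw [Real.norm_eq_abs, ← Real.sqrt_sq_eq_abs]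
    rw [← hv]
    apply Real.sqrt_le_sqrt
    exact Finset.single_le_sum (fun q _ => sq_nonneg (v q)) (Finset.mem_univ p)
  have hKcompact : IsCompact K := Metric.isCompact_of_isClosed_isBounded hKclosed hKbdd
  have hfc : Continuous f := by
    rw [hf]
    simp only [Matrix.mulVec, dotProduct]
    fun_prop
  have hBdd : BddBelow (f '' K) := (hKcompact.image hfc).bddBelow
  -- minimizer
  obtain ⟨z₀, hz₀⟩ := Finite.exists_min (gt x)
  rw [hSet]
  calc sInf (f '' K) ≤ f (w z₀) := csInf_le hBdd ⟨w z₀, hnorm z₀, rfl⟩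
    _ = gt x z₀ := hval z₀
    _ ≤ ⨅ z : ∀ m, Z m, gt x z := le_ciInf hz₀
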